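/- Let A be an abelian category with enough projectives and M a support τ-tilting subcategory. Then M equals the subcategory of Ext-projective objects of Fac M, i.e. M = P(Fac M). -/

import Mathlib

open CategoryTheory Limits Opposite

noncomputable section

universe v u

variable {C : Type u} [Category.{v} C] [Abelian C] [EnoughProjectives C]

attribute [local instance] CategoryTheory.Abelian.hasFiniteBiproducts

/-- `Fac M`: quotients of finite direct sums of objects of `M`. -/
def Fac (M : Set C) : Set C :=
  {X | ∃ (n : ℕ) (f : Fin n → C), (∀ i, f i ∈ M) ∧
    haveI : HasBiproductsOfShape (Fin n) C := HasFiniteBiproducts.out n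
    ∃ e : (⨁ f) ⟶ X, Epi e}

/-- Vanishing of `Ext¹(X, Y)`. -/
def ext1Zero (X Y : C) : Prop := Subsingleton (((Ext ℤ C 1).obj (op X)).obj Y)

/-- Vanishing of `Ext²(X, Y)`. -/
def ext2Zero (X Y : C) : Prop := Subsingleton (((Ext ℤ C 2).obj (op X)).obj Y)

/-- `v : P ⟶ V₀` is a left `M`-approximation. -/
def IsLeftApprox (M : Set C) {P V₀ : C} (v : P ⟶ V₀) : Prop :=
  ∀ V' ∈ M, ∀ h : P ⟶ V', ∃ t : V₀ ⟶ V', v ≫ t = h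

/-- `u : U₀ ⟶ X` is a right `M`-approximation. -/
def IsRightApprox (M : Set C) {U₀ X : C} (u : U₀ ⟶ X) : Prop :=
  ∀ M' ∈ M, ∀ h : M' ⟶ X, ∃ t : M' ⟶ U₀, t ≫ u = h

/-- The Ext-projective objects of `S`. -/
def ExtProj (S : Set C) : Set C := {D ∈ S | ∀ Z ∈ S, ext1Zero D Z}

/-- `M` is τ-rigid: `Ext¹(M, Fac M) = 0`. -/
def TauRigid (M : Set C) : Prop := ∀ M₀ ∈ M, ∀ X ∈ Fac M, ext1Zero M₀ X

/-- `P` admits an exact sequence `P ⟶ Ma ⟶ Mb ⟶ 0` with `Ma, Mb ∈ M` and the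
first map a left `M`-approximation. -/
def HasApproxSeq (M : Set C) (P : C) : Prop :=
  ∃ M₀ ∈ M, ∃ M₁ ∈ M, ∃ (m : P ⟶ M₀) (g : M₀ ⟶ M₁) (w : m ≫ g = 0),
    (ShortComplex.mk m g w).Exact ∧ Epi g ∧ IsLeftApprox M m

/-- `M` is a support τ-tilting subcategory. -/
def SupportTauTilting (M : Set C) : Prop :=
  TauRigid M ∧ ∀ P : C, Projective P → HasApproxSeq M P

/-- `0 ⟶ X ⟶ Y ⟶ Z ⟶ 0` is a short exact sequence. -/
def SES {X Y Z : C} (f : X ⟶ Y) (g : Y ⟶ Z) : Prop :=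
  ∃ w : f ≫ g = 0, (ShortComplex.mk f g w).Exact ∧ Mono f ∧ Epi g

/-- `U` is hereditary: `Ext²(U, −) = 0`. -/
def Hereditary1 (U : Set C) : Prop := ∀ U₀ ∈ U, ∀ X : C, ext2Zero U₀ X

/-- `U` is partial tilting. -/
def PartialTilting (U : Set C) : Prop :=
  Hereditary1 U ∧ ∀ U₀ ∈ U, ∀ U₁ ∈ U, ext1Zero U₀ U₁

/-- `U` is tilting. -/
def Tilting (U : Set C) : Prop :=
  PartialTilting U ∧ ∀ P : C, Projective P →
    ∃ Ua ∈ U, ∃ Ub ∈ U, ∃ (i : P ⟶ Ua) (p : Ua ⟶ Ub), SES i p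

/-- `U^⊥₁ = {X | Ext¹(U, X) = 0}`. -/
def Perp1 (U : Set C) : Set C := {X | ∀ U₀ ∈ U, ext1Zero U₀ X}

/-- `M` is closed under finite direct sums and direct summands. -/
def AdditivelyClosed (M : Set C) : Prop :=
  (∀ (n : ℕ) (f : Fin n → C), (∀ i, f i ∈ M) →
    haveI : HasBiproductsOfShape (Fin n) C := HasFiniteBiproducts.out n
    (⨁ f) ∈ M) ∧
  (∀ M₀ ∈ M, ∀ (X : C) (r : M₀ ⟶ X) (s : X ⟶ M₀), s ≫ r = 𝟙 X → X ∈ M)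

/-- The additive closure of a class of objects: direct summands of finite
direct sums of its objects. -/
def AddClosure (X : Set C) : Set C :=
  {Y | ∃ (n : ℕ) (f : Fin n → C), (∀ i, f i ∈ X) ∧
    haveI : HasBiproductsOfShape (Fin n) C := HasFiniteBiproducts.out n
    ∃ (r : (⨁ f) ⟶ Y) (s : Y ⟶ ⨁ f), s ≫ r = 𝟙 Y}


set_option linter.unusedSectionVars false

section AuxLemmas

open CategoryTheory.Abelian.Pseudoelement in
open scoped Pseudoelement in
lemma aux_epi_kernel_lift {A B X : C} (T : A ⟶ B) [Epi T] (F : B ⟶ X) :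
    Epi (kernel.lift F (kernel.ι (T ≫ F) ≫ T)
      (by rw [Category.assoc, kernel.condition])) := by
  apply epi_of_pseudo_surjective
  intro y
  obtain ⟨b, hb⟩ := pseudo_surjective_of_epi T (pseudoApply (kernel.ι F) y)
  have h0 : pseudoApply (T ≫ F) b = 0 := by
    rw [Abelian.Pseudoelement.comp_apply, hb, ← Abelian.Pseudoelement.comp_apply,
      kernel.condition, Abelian.Pseudoelement.zero_apply]
  have hS : (ShortComplex.mk (kernel.ι (T ≫ F)) (T ≫ F) (kernel.condition _)).Exact :=
    ShortComplex.exact_of_f_is_kernel _ (kernelIsKernel _)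
  obtain ⟨w, hw⟩ := pseudo_exact_of_exact hS b h0
  refine ⟨w, pseudo_injective_of_mono (kernel.ι F) ?_⟩
  rw [← Abelian.Pseudoelement.comp_apply, kernel.lift_ι,
    Abelian.Pseudoelement.comp_apply, hw, hb]

lemma mem_Fac_of_epi (M : Set C) {Y X : C} (hY : Y ∈ M) (e : Y ⟶ X) (he : Epi e) :
    X ∈ Fac M := by
  refine ⟨1, fun _ => Y, fun _ => hY, biproduct.desc (fun _ => 𝟙 Y) ≫ e, ?_⟩
  haveI : IsSplitEpi (biproduct.desc (fun _ : Fin 1 => 𝟙 Y)) :=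
    ⟨⟨⟨biproduct.ι (fun _ : Fin 1 => Y) 0, by simp⟩⟩⟩
  exact epi_comp _ _

lemma split_of_ext1Zero {B X : C} (F : B ⟶ X) [Epi F]
    (hext : ext1Zero X (kernel F)) : ∃ s : X ⟶ B, s ≫ F = 𝟙 X := by
  set K₁ := kernel F with hK₁
  let P : ProjectiveResolution X := ProjectiveResolution.of X
  let R := P.complex
  let s0 : ((ChainComplex.single₀ C).obj X).X 0 ≅ X :=
    HomologicalComplex.singleObjXSelf (ComplexShape.down ℕ) 0 X
  let p₀ : R.X 0 ⟶ X := P.π.f 0 ≫ s0.hom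
  let φ₀ : R.X 0 ⟶ B := Projective.factorThru p₀ F
  have hφ₀ : φ₀ ≫ F = p₀ := Projective.factorThru_comp _ _
  have hδ : (R.d 1 0 ≫ φ₀) ≫ F = 0 := by
    rw [Category.assoc, hφ₀]
    show R.d 1 0 ≫ P.π.f 0 ≫ s0.hom = 0
    rw [← Category.assoc, P.complex_d_comp_π_f_zero, zero_comp]
  let χ : R.X 1 ⟶ K₁ := kernel.lift F (R.d 1 0 ≫ φ₀) hδ
  have hχι : χ ≫ kernel.ι F = R.d 1 0 ≫ φ₀ := kernel.lift_ι _ _ _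
  let Kc := R.linearYonedaObj ℤ K₁
  have hsub : Subsingleton (Kc.homology 1) := by
    have e := P.isoExt (R := ℤ) 1 K₁
    have e' := ((forget (ModuleCat ℤ)).mapIso e).toEquiv
    haveI : Subsingleton (((Ext ℤ C 1).obj (op X)).obj K₁) := hext
    exact Equiv.subsingleton.symm e'
  have hex : Kc.ExactAt 1 :=
    (Kc.exactAt_iff_isZero_homology 1).2 (ModuleCat.isZero_of_subsingleton _)
  have hex2 : (Kc.sc' 0 1 2).Exact :=
    (Kc.exactAt_iff' 0 1 2 (by simp) (by simp)).1 hex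
  rw [ShortComplex.moduleCat_exact_iff] at hex2
  have hcond : (Kc.sc' 0 1 2).g (show (Kc.sc' 0 1 2).X₂ from χ) = 0 := by
    show (Kc.d 1 2) χ = 0
    rw [ChainComplex.linearYonedaObj_d]
    show R.d 2 1 ≫ χ = 0
    rw [← cancel_mono (kernel.ι F), Category.assoc, hχι, zero_comp,
      ← Category.assoc, R.d_comp_d, zero_comp]
  obtain ⟨ψ', hψ'⟩ := hex2 _ hcond
  let ψ : R.X 0 ⟶ K₁ := ψ'
  have hψ : R.d 1 0 ≫ ψ = χ := by
    have : (Kc.d 0 1) ψ' = χ := hψ'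
    rwa [ChainComplex.linearYonedaObj_d] at this
  let φ' : R.X 0 ⟶ B := φ₀ - ψ ≫ kernel.ι F
  have hdφ' : R.d 1 0 ≫ φ' = 0 := by
    simp only [φ', Preadditive.comp_sub, ← Category.assoc, hψ, hχι]
    simp
  obtain ⟨(u : ((ChainComplex.single₀ C).obj X).X 0 ⟶ B), hu⟩ := Cofork.IsColimit.desc' P.isColimitCokernelCofork φ' (by
    simpa using hdφ')
  have hu' : P.π.f 0 ≫ u = φ' := hu
  refine ⟨s0.inv ≫ u, ?_⟩
  have : u ≫ F = s0.hom := by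
    rw [← cancel_epi (P.π.f 0), ← Category.assoc, hu']
    show φ' ≫ F = P.π.f 0 ≫ s0.hom
    simp only [φ', Preadditive.sub_comp, hφ₀, Category.assoc, kernel.condition, comp_zero,
      sub_zero, p₀]
  rw [Category.assoc, this, Iso.inv_hom_id]

end AuxLemmas

theorem stmt5 (M : Set C) (hadd : AdditivelyClosed M)
    (h : SupportTauTilting M) : M = ExtProj (Fac M) := by
  obtain ⟨htau, happrox⟩ := h
  apply Set.Subset.antisymm
  · intro M₀ hM₀
    exact ⟨mem_Fac_of_epi M hM₀ (𝟙 M₀) inferInstance, fun Z hZ => htau M₀ hM₀ Z hZ⟩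
  · rintro X ⟨hXfac, hXext⟩
    obtain ⟨n, f, hf, e, he⟩ := hXfac
    haveI : Epi e := he
    have hM₀ : (⨁ f) ∈ M := hadd.1 n f hf
    obtain ⟨Na, hNa, Nb, hNb, m, g, wmg, hexact, hEg, hla⟩ :=
      happrox (Projective.over (kernel e)) inferInstance
    haveI : Epi g := hEg
    set g₀ : Projective.over (kernel e) ⟶ kernel e := Projective.π (kernel e) with hg₀
    obtain ⟨a, ha⟩ := hla (⨁ f) hM₀ (g₀ ≫ kernel.ι e)
    have hmaπ : m ≫ a ≫ e = 0 := by
      rw [← Category.assoc, ha, Category.assoc, kernel.condition, comp_zero]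
    haveI : Epi (ShortComplex.mk m g wmg).g := hEg
    have hcoker := hexact.gIsCokernel
    obtain ⟨d, hd⟩ := Cofork.IsColimit.desc' hcoker (a ≫ e) (by simpa using hmaπ)
    have hd' : g ≫ d = a ≫ e := hd
    set F : (⨁ f) ⊞ Nb ⟶ X := biprod.desc e d with hF
    haveI hEF : Epi F := epi_of_epi_fac (biprod.inl_desc e d)
    have hβF : biprod.lift a (-g) ≫ F = 0 := by
      simp [hF, hd']
    set ξ : Na ⟶ kernel F := kernel.lift F _ hβF with hξ
    set T : (⨁ f) ⊞ Na ⟶ (⨁ f) ⊞ Nb := biprod.desc biprod.inl (biprod.lift a (-g)) with hT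
    haveI hET : Epi T := by
      refine Preadditive.epi_of_cancel_zero _ (fun {Z} c hc => ?_)
      have h1 : biprod.inl ≫ c = 0 := by
        have := biprod.inl ≫= hc
        rwa [← Category.assoc, hT, biprod.inl_desc, comp_zero] at this
      have h2 : biprod.inr ≫ c = 0 := by
        have := biprod.inr ≫= hc
        rw [← Category.assoc, hT, biprod.inr_desc, comp_zero, biprod.lift_eq] at this
        simp only [Preadditive.add_comp, Preadditive.neg_comp, Category.assoc, h1, comp_zero,
          zero_add, neg_eq_zero] at this
        exact (cancel_epi g).1 (by rw [this, comp_zero])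
      exact biprod.hom_ext' _ _ (by rw [h1, comp_zero]) (by rw [h2, comp_zero])
    have hTF : T ≫ F = biprod.fst ≫ e := by
      apply biprod.hom_ext'
      · rw [← Category.assoc, hT, biprod.inl_desc, hF, biprod.inl_desc, ← Category.assoc,
          biprod.inl_fst, Category.id_comp]
      · rw [← Category.assoc, hT, biprod.inr_desc, hβF, ← Category.assoc, biprod.inr_fst,
          zero_comp]
    have hκ : Epi (kernel.lift F (kernel.ι (T ≫ F) ≫ T)
        (by rw [Category.assoc, kernel.condition])) := aux_epi_kernel_lift T F
    have hρcond : biprod.map (kernel.ι e) (𝟙 Na) ≫ (T ≫ F) = 0 := by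
      rw [hTF, ← Category.assoc, biprod.map_fst, Category.assoc, kernel.condition, comp_zero]
    set ρ : kernel e ⊞ Na ⟶ kernel (T ≫ F) := kernel.lift (T ≫ F) _ hρcond with hρ
    have hfstcond : (kernel.ι (T ≫ F) ≫ biprod.fst) ≫ e = 0 := by
      rw [Category.assoc, ← hTF, kernel.condition]
    set inv : kernel (T ≫ F) ⟶ kernel e ⊞ Na :=
      biprod.lift (kernel.lift e _ hfstcond) (kernel.ι (T ≫ F) ≫ biprod.snd) with hinv
    have hsec : inv ≫ ρ = 𝟙 _ := by
      rw [← cancel_mono (kernel.ι (T ≫ F))]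
      simp only [hρ, hinv, Category.assoc, kernel.lift_ι, Category.id_comp]
      apply biprod.hom_ext <;> simp
    haveI : IsSplitEpi ρ := ⟨⟨⟨inv, hsec⟩⟩⟩
    haveI : Epi (biprod.map g₀ (𝟙 Na)) := inferInstance
    have hfac : biprod.desc m (𝟙 Na) ≫ ξ = biprod.map g₀ (𝟙 Na) ≫ ρ ≫
        (kernel.lift F (kernel.ι (T ≫ F) ≫ T) (by rw [Category.assoc, kernel.condition])) := by
      rw [← cancel_mono (kernel.ι F)]
      simp only [hξ, Category.assoc, kernel.lift_ι]
      have hρι : ρ ≫ kernel.ι (T ≫ F) = biprod.map (kernel.ι e) (𝟙 Na) := kernel.lift_ι _ _ _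
      rw [← Category.assoc ρ, hρι]
      apply biprod.hom_ext' <;> apply biprod.hom_ext <;>
        simp [hT, ha, wmg]
    haveI hEξ : Epi ξ := by
      haveI := hκ
      haveI : Epi (biprod.map g₀ (𝟙 Na) ≫ ρ ≫
          (kernel.lift F (kernel.ι (T ≫ F) ≫ T)
            (by rw [Category.assoc, kernel.condition]))) := epi_comp _ _
      exact epi_of_epi_fac hfac
    have hKfac : kernel F ∈ Fac M := mem_Fac_of_epi M hNa ξ hEξ
    obtain ⟨s, hs⟩ := split_of_ext1Zero F (hXext _ hKfac)
    set fb : Fin 2 → C := ![⨁ f, Nb] with hfbdef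
    have hfb : ∀ i, fb i ∈ M := by
      intro i; fin_cases i
      · exact hM₀
      · exact hNb
    have hBmem : (⨁ fb) ∈ M := hadd.1 2 fb hfb
    set toB : (⨁ f) ⊞ Nb ⟶ ⨁ fb :=
      biprod.desc (biproduct.ι fb 0) (biproduct.ι fb 1) with htoB
    set retB : (⨁ fb) ⟶ (⨁ f) ⊞ Nb :=
      biprod.lift (biproduct.π fb 0) (biproduct.π fb 1) with hretB
    have hBsec : toB ≫ retB = 𝟙 _ := by
      apply biprod.hom_ext'
      · apply biprod.hom_ext
        · simp only [htoB, hretB, Category.assoc, Category.id_comp, biprod.inl_fst, biprod.inl_snd,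
            biprod.inr_fst, biprod.inr_snd]
          exact (biprod.inl_desc_assoc _ _ _).trans
            ((congrArg (biproduct.ι fb 0 ≫ ·) (biprod.lift_fst _ _)).trans (biproduct.ι_π_self fb 0))
        · simp only [htoB, hretB, Category.assoc, Category.id_comp, biprod.inl_fst, biprod.inl_snd,
            biprod.inr_fst, biprod.inr_snd]
          exact (biprod.inl_desc_assoc _ _ _).trans
            ((congrArg (biproduct.ι fb 0 ≫ ·) (biprod.lift_snd _ _)).trans
              (biproduct.ι_π_ne fb (by decide : (0 : Fin 2) ≠ 1)))
      · apply biprod.hom_ext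
        · simp only [htoB, hretB, Category.assoc, Category.id_comp, biprod.inl_fst, biprod.inl_snd,
            biprod.inr_fst, biprod.inr_snd]
          exact (biprod.inr_desc_assoc _ _ _).trans
            ((congrArg (biproduct.ι fb 1 ≫ ·) (biprod.lift_fst _ _)).trans
              (biproduct.ι_π_ne fb (by decide : (1 : Fin 2) ≠ 0)))
        · simp only [htoB, hretB, Category.assoc, Category.id_comp, biprod.inl_fst, biprod.inl_snd,
            biprod.inr_fst, biprod.inr_snd]
          exact (biprod.inr_desc_assoc _ _ _).trans
            ((congrArg (biproduct.ι fb 1 ≫ ·) (biprod.lift_snd _ _)).trans (biproduct.ι_π_self fb 1))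
    refine hadd.2 _ hBmem X (retB ≫ F) (s ≫ toB) ?_
    rw [Category.assoc, ← Category.assoc toB, hBsec, Category.id_comp, hs]
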